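/- Let τ belong to class 𝒯, with constants α ∈ (0,1) and D > 0 such that ‖P_τ f‖_∞ ≤ α‖f‖_∞ + D‖f‖_1 for all nonnegative non-increasing f ∈ L¹ ∩ L^∞, and set K = 1 + D/(1−α). Let S = ⋃_{n≥0} τ^{-n}({a_i, b_i : i≥1}). Then for every probability density f on I that is a finite nonnegative linear combination f = Σ_{j=1}^N c_j χ_{Δ_j} of indicator functions of intervals Δ_j whose endpoints belong to S, there exists n₁ ∈ ℕ such that for all n ≥ n₁, P_τ^n f(x) ≥ (1/2)·χ_{[0,1/(2K)]}(x) for all x ∈ I; i.e., h = (1/2)·χ_{[0,1/(2K)]} is a lower function for P_τ. -/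

import Mathlib

open Set Filter MeasureTheory Topology

structure PCT where
  τ : ℝ → ℝ
  a : ℕ → ℝ
  b : ℕ → ℝ
  da : ℕ → ℝ
  maps_to : Set.MapsTo τ (Set.Icc 0 1) (Set.Icc 0 1)
  lt : ∀ i, a i < b i
  sub : ∀ i, Set.Ioo (a i) (b i) ⊆ Set.Icc (0:ℝ) 1
  disj : Pairwise (Function.onFun Disjoint fun i => Set.Ioo (a i) (b i))
  null : volume (Set.Icc (0:ℝ) 1 \ ⋃ i, Set.Ioo (a i) (b i)) = 0
  mono : ∀ i, StrictMonoOn τ (Set.Ioo (a i) (b i))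
  conv : ∀ i, ConvexOn ℝ (Set.Ioo (a i) (b i)) τ
  diff : ∀ i, ∀ x ∈ Set.Ioo (a i) (b i), DifferentiableAt ℝ τ x
  lim_zero : ∀ i, Filter.Tendsto τ (nhdsWithin (a i) (Set.Ioi (a i))) (nhds 0)
  deriv_lim : ∀ i, Filter.Tendsto (deriv τ) (nhdsWithin (a i) (Set.Ioi (a i))) (nhds (da i))
  da_pos : ∀ i, 0 < da i
  sum_inv : Summable (fun i => 1 / da i)
  expand : (¬ AccPt (0:ℝ) (Filter.principal (Set.range a))) → ∃ i, a i = 0 ∧ 1 < da i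

/-- The interval `(c,d)` follows a single sequence of branches under the first `n`
iterates of `τ`. -/
def IsBranchSeq (T : PCT) (n : ℕ) (c d : ℝ) : Prop :=
  c < d ∧ ∀ k < n, ∃ i, T.τ^[k] '' Set.Ioo c d ⊆ Set.Ioo (T.a i) (T.b i)

/-- `(c,d)` is a maximal open interval on which `τ^n` is a single monotone branch,
i.e. an element of the partition `𝒫⁽ⁿ⁾`. -/
def IsBranchInterval (T : PCT) (n : ℕ) (c d : ℝ) : Prop :=
  IsBranchSeq T n c d ∧
    ∀ c' d', c' ≤ c → d ≤ d' → IsBranchSeq T n c' d' → c' = c ∧ d' = d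

namespace LFAux

variable (T : PCT)

lemma a_nonneg (i : ℕ) : 0 ≤ T.a i := by
  by_contra h
  push_neg at h
  obtain ⟨x, hx⟩ : (Set.Ioo (T.a i) (min (T.b i) 0)).Nonempty := by
    refine nonempty_Ioo.2 (lt_min (T.lt i) h)
  have := T.sub i ⟨hx.1, lt_of_lt_of_le hx.2 (min_le_left _ _)⟩
  exact absurd this.1 (not_le.2 (lt_of_lt_of_le hx.2 (min_le_right _ _)))

lemma b_le_one (i : ℕ) : T.b i ≤ 1 := by
  by_contra h
  push_neg at h
  obtain ⟨x, hx⟩ : (Set.Ioo (max (T.a i) 1) (T.b i)).Nonempty := by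
    refine nonempty_Ioo.2 (max_lt (T.lt i) h)
  have := T.sub i ⟨lt_of_le_of_lt (le_max_left _ _) hx.1, hx.2⟩
  exact absurd this.2 (not_le.2 (lt_of_le_of_lt (le_max_right _ _) hx.1))

lemma a_mem (i : ℕ) : T.a i ∈ Set.Icc (0:ℝ) 1 :=
  ⟨a_nonneg T i, le_trans (le_of_lt (T.lt i)) (b_le_one T i)⟩

lemma b_mem (i : ℕ) : T.b i ∈ Set.Icc (0:ℝ) 1 :=
  ⟨le_trans (a_nonneg T i) (le_of_lt (T.lt i)), b_le_one T i⟩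

lemma tau_mem {i : ℕ} {x : ℝ} (hx : x ∈ Set.Ioo (T.a i) (T.b i)) :
    T.τ x ∈ Set.Icc (0:ℝ) 1 := T.maps_to (T.sub i hx)

lemma tau_pos {i : ℕ} {x : ℝ} (hx : x ∈ Set.Ioo (T.a i) (T.b i)) : 0 < T.τ x := by
  obtain ⟨y, hy⟩ : (Set.Ioo (T.a i) x).Nonempty := nonempty_Ioo.2 hx.1
  have hyI : y ∈ Set.Ioo (T.a i) (T.b i) := ⟨hy.1, hy.2.trans hx.2⟩
  have h1 : T.τ y < T.τ x := T.mono i hyI hx hy.2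
  exact lt_of_le_of_lt (tau_mem T hyI).1 h1

/-- endpoints are not interior to any branch -/
lemma a_not_mem_Ioo (i i' : ℕ) : T.a i ∉ Set.Ioo (T.a i') (T.b i') := by
  intro h
  rcases eq_or_ne i i' with rfl | hne
  · exact lt_irrefl _ h.1
  · obtain ⟨x, hx⟩ : (Set.Ioo (T.a i) (min (T.b i) (T.b i'))).Nonempty :=
      nonempty_Ioo.2 (lt_min (T.lt i) h.2)
    have hxi : x ∈ Set.Ioo (T.a i) (T.b i) := ⟨hx.1, lt_of_lt_of_le hx.2 (min_le_left _ _)⟩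
    have hxi' : x ∈ Set.Ioo (T.a i') (T.b i') :=
      ⟨h.1.trans hx.1, lt_of_lt_of_le hx.2 (min_le_right _ _)⟩
    exact (T.disj hne).le_bot ⟨hxi, hxi'⟩ |>.elim

lemma b_not_mem_Ioo (i i' : ℕ) : T.b i ∉ Set.Ioo (T.a i') (T.b i') := by
  intro h
  rcases eq_or_ne i i' with rfl | hne
  · exact lt_irrefl _ h.2
  · obtain ⟨x, hx⟩ : (Set.Ioo (max (T.a i) (T.a i')) (T.b i)).Nonempty :=
      nonempty_Ioo.2 (max_lt (T.lt i) h.1)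
    have hxi : x ∈ Set.Ioo (T.a i) (T.b i) := ⟨lt_of_le_of_lt (le_max_left _ _) hx.1, hx.2⟩
    have hxi' : x ∈ Set.Ioo (T.a i') (T.b i') :=
      ⟨lt_of_le_of_lt (le_max_right _ _) hx.1, hx.2.trans_le h.2.le⟩
    exact (T.disj hne).le_bot ⟨hxi, hxi'⟩ |>.elim

/-- sublevel set of the branch `i` at level `t` -/
def E (i : ℕ) (t : ℝ) : Set ℝ := {x ∈ Set.Ioo (T.a i) (T.b i) | T.τ x ≤ t}

/-- the (generalized) inverse branch -/
noncomputable def σ (i : ℕ) (t : ℝ) : ℝ := sSup (insert (T.a i) (E T i t))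

lemma E_subset_Ioo {i : ℕ} {t : ℝ} : E T i t ⊆ Set.Ioo (T.a i) (T.b i) := fun _ h => h.1

lemma bdd (i : ℕ) (t : ℝ) : BddAbove (insert (T.a i) (E T i t)) := by
  refine ⟨T.b i, ?_⟩
  rintro x (rfl | hx)
  · exact (T.lt i).le
  · exact hx.1.2.le

lemma a_le_σ (i : ℕ) (t : ℝ) : T.a i ≤ σ T i t :=
  le_csSup (bdd T i t) (mem_insert _ _)

lemma σ_le_b (i : ℕ) (t : ℝ) : σ T i t ≤ T.b i := by
  refine csSup_le (insert_nonempty _ _) ?_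
  rintro x (rfl | hx)
  · exact (T.lt i).le
  · exact hx.1.2.le

lemma le_σ_of_mem {i : ℕ} {t x : ℝ} (hx : x ∈ E T i t) : x ≤ σ T i t :=
  le_csSup (bdd T i t) (mem_insert_of_mem _ hx)

lemma Ioo_subset_E {i : ℕ} {t : ℝ} : Set.Ioo (T.a i) (σ T i t) ⊆ E T i t := by
  intro y hy
  obtain ⟨z, hz, hyz⟩ := exists_lt_of_lt_csSup (insert_nonempty _ _) hy.2
  rcases hz with rfl | hz
  · exact absurd hy.1 (not_lt.2 hyz.le)
  · have hyIoo : y ∈ Set.Ioo (T.a i) (T.b i) := ⟨hy.1, hyz.trans hz.1.2⟩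
    exact ⟨hyIoo, le_trans (le_of_lt (T.mono i hyIoo hz.1 hyz)) hz.2⟩

lemma E_subset_Ioc {i : ℕ} {t : ℝ} : E T i t ⊆ Set.Ioc (T.a i) (σ T i t) :=
  fun x hx => ⟨hx.1.1, le_σ_of_mem T hx⟩

lemma E_measurable (i : ℕ) (t : ℝ) : MeasurableSet (E T i t) := by
  have h1 : E T i t = Set.Ioo (T.a i) (σ T i t) ∪ (E T i t ∩ {σ T i t}) := by
    apply Subset.antisymm
    · intro x hx
      rcases lt_or_eq_of_le (le_σ_of_mem T hx) with h | h
      · exact Or.inl ⟨hx.1.1, h⟩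
      · exact Or.inr ⟨hx, h⟩
    · rintro x (hx | hx)
      · exact Ioo_subset_E T hx
      · exact hx.1
  rw [h1]
  exact measurableSet_Ioo.union
    (Set.Countable.measurableSet ((countable_singleton _).mono inter_subset_right))

lemma E_ae_eq_Ioc (i : ℕ) (t : ℝ) : E T i t =ᵐ[volume] Set.Ioc (T.a i) (σ T i t) := by
  rw [Filter.eventuallyEq_set]
  have hsub : {x | x ∈ E T i t ↔ x ∈ Set.Ioc (T.a i) (σ T i t)}ᶜ ⊆ {σ T i t} := by
    intro x hx
    simp only [mem_compl_iff, mem_setOf_eq] at hx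
    by_contra hne
    simp only [mem_singleton_iff] at hne
    refine hx ⟨fun h => E_subset_Ioc T h, fun h => ?_⟩
    exact Ioo_subset_E T ⟨h.1, lt_of_le_of_ne h.2 hne⟩
  exact measure_mono_null hsub (measure_singleton _)

lemma σ_mono (i : ℕ) : Monotone (σ T i) := by
  intro s t hst
  refine csSup_le_csSup (bdd T i t) (insert_nonempty _ _) ?_
  rintro x (rfl | hx)
  · exact mem_insert _ _
  · exact mem_insert_of_mem _ ⟨hx.1, hx.2.trans hst⟩

/-- key approximation property -/
lemma claimA (i : ℕ) {t : ℝ} (ht : 0 ≤ t) {δ ε : ℝ} (hδ : 0 < δ) (hε : 0 < ε) :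
    ∃ x ∈ Set.Ioo (T.a i) (T.b i), σ T i t - ε < x ∧ T.τ x ≤ t + δ := by
  obtain ⟨z, hz, hlt⟩ := exists_lt_of_lt_csSup (insert_nonempty (T.a i) (E T i t))
    (show σ T i t - ε < σ T i t by linarith)
  rcases hz with rfl | hz
  · -- z = a i; use lim_zero to find a point just to the right of a i with small τ
    have h1 : ∀ᶠ x in nhdsWithin (T.a i) (Set.Ioi (T.a i)), T.τ x < δ :=
      (T.lim_zero i).eventually_lt_const hδ
    have h2 : Set.Ioo (T.a i) (T.b i) ∈ nhdsWithin (T.a i) (Set.Ioi (T.a i)) := by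
      apply Ioo_mem_nhdsGT_of_mem
      exact ⟨le_refl _, T.lt i⟩
    have h2' : ∀ᶠ x in nhdsWithin (T.a i) (Set.Ioi (T.a i)), x ∈ Set.Ioo (T.a i) (T.b i) := h2
    obtain ⟨x, hx1, hx2⟩ := (h1.and h2').exists
    exact ⟨x, hx2, lt_of_lt_of_le hlt hx2.1.le, le_trans hx1.le (by linarith)⟩
  · exact ⟨z, hz.1, hlt, hz.2.trans (by linarith)⟩

lemma σ_concave (i : ℕ) : ConcaveOn ℝ (Set.Icc (0:ℝ) 1) (σ T i) := by
  refine ⟨convex_Icc _ _, ?_⟩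
  intro t₁ ht₁ t₂ ht₂ p q hp hq hpq
  simp only [smul_eq_mul]
  set c := p * σ T i t₁ + q * σ T i t₂ with hc
  set m := p * t₁ + q * t₂ with hm
  have hm0 : 0 ≤ m := add_nonneg (mul_nonneg hp ht₁.1) (mul_nonneg hq ht₂.1)
  have hcb : c ≤ T.b i := by
    have h1 := σ_le_b T i t₁
    have h2 := σ_le_b T i t₂
    calc c ≤ p * T.b i + q * T.b i := by
            exact add_le_add (mul_le_mul_of_nonneg_left h1 hp) (mul_le_mul_of_nonneg_left h2 hq)
      _ = T.b i := by rw [← add_mul, hpq, one_mul]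
  have key : ∀ y, T.a i < y → y < c → y ∈ E T i m := by
    intro y hya hyc
    have hyb : y < T.b i := lt_of_lt_of_le hyc hcb
    have hyIoo : y ∈ Set.Ioo (T.a i) (T.b i) := ⟨hya, hyb⟩
    have hτy : ∀ δ : ℝ, 0 < δ → T.τ y ≤ m + δ := by
      intro δ hδ
      have hε : (0:ℝ) < c - y := by linarith
      obtain ⟨x₁, hx₁Ioo, hx₁gt, hx₁τ⟩ := claimA T i ht₁.1 hδ hε
      obtain ⟨x₂, hx₂Ioo, hx₂gt, hx₂τ⟩ := claimA T i ht₂.1 hδ hε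
      have hu : y < p * x₁ + q * x₂ := by
        rcases eq_or_lt_of_le hp with hp0 | hp0
        · rw [← hp0] at hpq ⊢
          have hq1 : q = 1 := by linarith
          rw [hq1]
          simp only [zero_mul, one_mul, zero_add]
          have : c = σ T i t₂ := by rw [hc, ← hp0, hq1]; ring
          linarith
        rcases eq_or_lt_of_le hq with hq0 | hq0
        · rw [← hq0] at hpq ⊢
          have hp1 : p = 1 := by linarith
          rw [hp1]
          simp only [zero_mul, one_mul, add_zero]
          have : c = σ T i t₁ := by rw [hc, ← hq0, hp1]; ring
          linarith
        · nlinarith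
      have huIoo : p • x₁ + q • x₂ ∈ Set.Ioo (T.a i) (T.b i) :=
        (convex_Ioo (T.a i) (T.b i)) hx₁Ioo hx₂Ioo hp hq hpq
      simp only [smul_eq_mul] at huIoo
      have hτu : T.τ (p * x₁ + q * x₂) ≤ m + δ := by
        have hcv := (T.conv i).2 hx₁Ioo hx₂Ioo hp hq hpq
        simp only [smul_eq_mul] at hcv
        have h5 : p * T.τ x₁ ≤ p * (t₁ + δ) := mul_le_mul_of_nonneg_left hx₁τ hp
        have h6 : q * T.τ x₂ ≤ q * (t₂ + δ) := mul_le_mul_of_nonneg_left hx₂τ hq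
        have : p * (t₁ + δ) + q * (t₂ + δ) = m + δ := by rw [hm]; ring_nf; nlinarith [hpq]
        linarith
      have := T.mono i hyIoo huIoo hu
      linarith
    refine ⟨hyIoo, le_of_forall_pos_le_add hτy⟩
  rcases le_or_gt c (T.a i) with h | h
  · exact le_trans h (a_le_σ T i m)
  · by_contra hcon
    push_neg at hcon
    have hmax : max (T.a i) (σ T i m) < c := max_lt h hcon
    obtain ⟨y, hy⟩ : (Set.Ioo (max (T.a i) (σ T i m)) c).Nonempty := nonempty_Ioo.2 hmax
    have hyE := key y (lt_of_le_of_lt (le_max_left _ _) hy.1) hy.2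
    exact absurd (le_σ_of_mem T hyE) (not_le.2 (lt_of_le_of_lt (le_max_right _ _) hy.1))

/-! Part 3: the cumulative distribution `Fi` and the one-step Frobenius–Perron identity. -/

/-- cumulative integral of `g` -/
noncomputable def Fi (g : ℝ → ℝ) (c : ℝ) : ℝ := ∫ x in Set.Ioc (0:ℝ) c, g x

lemma F_diff {g : ℝ → ℝ} (hgi : MeasureTheory.IntegrableOn g (Set.Icc (0:ℝ) 1))
    {u v : ℝ} (h0 : 0 ≤ u) (huv : u ≤ v) (h1 : v ≤ 1) :
    Fi g v - Fi g u = ∫ x in Set.Ioc u v, g x := by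
  have hdisj : Disjoint (Set.Ioc (0:ℝ) u) (Set.Ioc u v) := by
    rw [Set.disjoint_left]
    intro x hx hx'
    exact absurd hx.2 (not_le.2 hx'.1)
  have h2 : Set.Ioc (0:ℝ) v = Set.Ioc 0 u ∪ Set.Ioc u v := (Set.Ioc_union_Ioc_eq_Ioc h0 huv).symm
  have hi1 : MeasureTheory.IntegrableOn g (Set.Ioc (0:ℝ) u) :=
    hgi.mono_set (fun x hx => ⟨hx.1.le, hx.2.trans (huv.trans h1)⟩)
  have hi2 : MeasureTheory.IntegrableOn g (Set.Ioc u v) :=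
    hgi.mono_set (fun x hx => ⟨h0.trans hx.1.le, hx.2.trans h1⟩)
  rw [Fi, Fi, h2, MeasureTheory.setIntegral_union hdisj measurableSet_Ioc hi1 hi2]
  ring

lemma F_mono {g : ℝ → ℝ} (hgi : MeasureTheory.IntegrableOn g (Set.Icc (0:ℝ) 1))
    (hg0 : 0 ≤ᵐ[volume.restrict (Set.Icc (0:ℝ) 1)] g) :
    MonotoneOn (Fi g) (Set.Icc (0:ℝ) 1) := by
  intro u hu v hv huv
  have := F_diff hgi hu.1 huv hv.2
  have hpos : 0 ≤ ∫ x in Set.Ioc u v, g x := by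
    apply MeasureTheory.setIntegral_nonneg_of_ae_restrict
    refine hg0.filter_mono (MeasureTheory.ae_mono (MeasureTheory.Measure.restrict_mono ?_ le_rfl))
    exact fun x hx => ⟨hu.1.trans hx.1.le, hx.2.trans hv.2⟩
  linarith

lemma hasSum_F {P : (ℝ → ℝ) → (ℝ → ℝ)} {g : ℝ → ℝ}
    (hgi : MeasureTheory.IntegrableOn g (Set.Icc (0:ℝ) 1))
    (hP2 : ∀ A : Set ℝ, MeasurableSet A → A ⊆ Set.Icc (0:ℝ) 1 →
      ∫ x in A, P g x = ∫ x in T.τ ⁻¹' A ∩ Set.Icc (0:ℝ) 1, g x)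
    {t : ℝ} (ht : t ∈ Set.Icc (0:ℝ) 1) :
    HasSum (fun i => Fi g (σ T i t) - Fi g (T.a i)) (Fi (P g) t) := by
  have hIoc : Set.Ioc (0:ℝ) t ⊆ Set.Icc (0:ℝ) 1 := fun x hx => ⟨hx.1.le, hx.2.trans ht.2⟩
  have h1 : Fi (P g) t = ∫ x in T.τ ⁻¹' (Set.Ioc (0:ℝ) t) ∩ Set.Icc (0:ℝ) 1, g x :=
    hP2 _ measurableSet_Ioc hIoc
  set A := T.τ ⁻¹' (Set.Ioc (0:ℝ) t) ∩ Set.Icc (0:ℝ) 1 with hA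
  set U := ⋃ i, E T i t with hU
  have hUsub : U ⊆ Set.Icc (0:ℝ) 1 := by
    rw [hU]
    exact Set.iUnion_subset (fun i => (E_subset_Ioo T).trans (T.sub i))
  have hae : A =ᵐ[volume] U := by
    rw [Filter.eventuallyEq_set]
    have hsub : {x | x ∈ A ↔ x ∈ U}ᶜ ⊆ Set.Icc (0:ℝ) 1 \ ⋃ i, Set.Ioo (T.a i) (T.b i) := by
      intro x hx
      simp only [Set.mem_compl_iff, Set.mem_setOf_eq] at hx
      by_contra hcon
      rw [Set.mem_diff] at hcon
      push_neg at hcon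
      rcases Classical.em (x ∈ Set.Icc (0:ℝ) 1) with hxI | hxI
      · obtain ⟨i, hxi⟩ := Set.mem_iUnion.1 (hcon hxI)
        refine hx ⟨fun hxA => Set.mem_iUnion.2 ⟨i, hxi, hxA.1.2⟩, fun hxU => ?_⟩
        obtain ⟨i', hxi'⟩ := Set.mem_iUnion.1 hxU
        exact ⟨⟨tau_pos T hxi'.1, hxi'.2⟩, hxI⟩
      · refine hx ⟨fun hxA => absurd hxA.2 hxI, fun hxU => absurd (hUsub hxU) hxI⟩
    exact MeasureTheory.measure_mono_null hsub T.null
  rw [h1, MeasureTheory.setIntegral_congr_set hae]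
  have hmeas : ∀ i, MeasurableSet (E T i t) := fun i => E_measurable T i t
  have hdisj : Pairwise (Function.onFun Disjoint fun i => E T i t) :=
    T.disj.mono (fun i j h => h.mono (E_subset_Ioo T) (E_subset_Ioo T))
  have hint : MeasureTheory.IntegrableOn g U := hgi.mono_set hUsub
  have hs := MeasureTheory.hasSum_integral_iUnion hmeas hdisj hint
  have hUeq : (∫ (x : ℝ) in U, g x) = ∫ (x : ℝ) in ⋃ n, E T n t, g x := by rw [hU]
  rw [hUeq]
  suffices hfe : (fun i => Fi g (σ T i t) - Fi g (T.a i)) = (fun n => ∫ x in E T n t, g x) by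
    rw [hfe]; exact hs
  funext i
  rw [MeasureTheory.setIntegral_congr_set (E_ae_eq_Ioc T i t)]
  rw [F_diff hgi (a_nonneg T i) (a_le_σ T i t) ((σ_le_b T i t).trans (b_le_one T i))]

/-! Part 4: piecewise concavity and its propagation under the Frobenius–Perron operator. -/

/-- `F` is concave on every subinterval of `[0,1]` avoiding the kink set `J`. -/
def PWC (J : Set ℝ) (F : ℝ → ℝ) : Prop :=
  ∀ u v : ℝ, 0 ≤ u → v ≤ 1 → (∀ j ∈ J, j ∉ Set.Ioo u v) → ConcaveOn ℝ (Set.Icc u v) F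

lemma comp_concave {F s : ℝ → ℝ} {u v : ℝ} (huv : u ≤ v)
    (hs_mono : Monotone s) (hs_conc : ConcaveOn ℝ (Set.Icc u v) s)
    (hrange : ∀ x, s x ∈ Set.Icc (0:ℝ) 1)
    (hF_mono : MonotoneOn F (Set.Icc (0:ℝ) 1))
    (hF_conc : ConcaveOn ℝ (Set.Icc (s u) (s v)) F) :
    ConcaveOn ℝ (Set.Icc u v) (fun t => F (s t)) := by
  refine ⟨convex_Icc _ _, ?_⟩
  intro x hx y hy p q hp hq hpq
  simp only [smul_eq_mul]
  have h1 : p * s x + q * s y ≤ s (p * x + q * y) := by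
    have := hs_conc.2 hx hy hp hq hpq
    simpa using this
  have hmemx : s x ∈ Set.Icc (s u) (s v) := ⟨hs_mono hx.1, hs_mono hx.2⟩
  have hmemy : s y ∈ Set.Icc (s u) (s v) := ⟨hs_mono hy.1, hs_mono hy.2⟩
  have hz : p * s x + q * s y ∈ Set.Icc (s u) (s v) := by
    have := (convex_Icc (s u) (s v)) hmemx hmemy hp hq hpq
    simpa using this
  have hz01 : p * s x + q * s y ∈ Set.Icc (0:ℝ) 1 :=
    ⟨le_trans (hrange u).1 hz.1, le_trans hz.2 (hrange v).2⟩
  have h2 : p * F (s x) + q * F (s y) ≤ F (p * s x + q * s y) := by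
    have := hF_conc.2 hmemx hmemy hp hq hpq
    simpa using this
  exact le_trans h2 (hF_mono hz01 (hrange _) h1)

lemma comp_PWC {P : (ℝ → ℝ) → (ℝ → ℝ)} {g : ℝ → ℝ}
    (hgi : MeasureTheory.IntegrableOn g (Set.Icc (0:ℝ) 1))
    (hg0 : 0 ≤ᵐ[volume.restrict (Set.Icc (0:ℝ) 1)] g)
    (hP2 : ∀ A : Set ℝ, MeasurableSet A → A ⊆ Set.Icc (0:ℝ) 1 →
      ∫ x in A, P g x = ∫ x in T.τ ⁻¹' A ∩ Set.Icc (0:ℝ) 1, g x)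
    {J : Set ℝ} (hJ : PWC J (Fi g)) :
    PWC (T.τ '' (J ∩ ⋃ i, Set.Ioo (T.a i) (T.b i))) (Fi (P g)) := by
  intro u v hu hv hgap
  rcases le_or_gt u v with huv | hvu
  swap
  · refine ⟨convex_Icc _ _, ?_⟩
    intro x hx
    rw [Set.Icc_eq_empty (not_le.2 hvu)] at hx
    exact absurd hx (Set.notMem_empty x)
  have hFmono := F_mono hgi hg0
  have hHconc : ∀ i, ConcaveOn ℝ (Set.Icc u v) (fun t => Fi g (σ T i t)) := by
    intro i
    refine comp_concave huv (σ_mono T i)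
      (((σ_concave T i)).subset (fun x hx => ⟨hu.trans hx.1, hx.2.trans hv⟩) (convex_Icc _ _))
      (fun x => ⟨(a_nonneg T i).trans (a_le_σ T i x), (σ_le_b T i x).trans (b_le_one T i)⟩)
      hFmono ?_
    refine hJ (σ T i u) (σ T i v) ((a_nonneg T i).trans (a_le_σ T i u))
      ((σ_le_b T i v).trans (b_le_one T i)) ?_
    intro j hjJ hjIoo
    have hjIooab : j ∈ Set.Ioo (T.a i) (T.b i) :=
      ⟨lt_of_le_of_lt (a_le_σ T i u) hjIoo.1, lt_of_lt_of_le hjIoo.2 (σ_le_b T i v)⟩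
    have hτj1 : u < T.τ j := by
      by_contra hcon
      push_neg at hcon
      exact absurd (le_σ_of_mem T ⟨hjIooab, hcon⟩) (not_le.2 hjIoo.1)
    have hτj2 : T.τ j < v := by
      by_contra hcon
      push_neg at hcon
      obtain ⟨z, hz, hjz⟩ := exists_lt_of_lt_csSup (insert_nonempty (T.a i) (E T i v)) hjIoo.2
      rcases hz with rfl | hz
      · exact absurd hjIooab.1 (not_lt.2 hjz.le)
      · have hτlt : T.τ j < T.τ z := T.mono i hjIooab hz.1 hjz
        exact absurd (hz.2.trans hcon) (not_le.2 hτlt)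
    exact hgap (T.τ j) ⟨j, ⟨hjJ, Set.mem_iUnion.2 ⟨i, hjIooab⟩⟩, rfl⟩ ⟨hτj1, hτj2⟩
  refine ⟨convex_Icc _ _, ?_⟩
  intro x hx y hy p q hp hq hpq
  simp only [smul_eq_mul]
  have hxI : x ∈ Set.Icc (0:ℝ) 1 := ⟨hu.trans hx.1, hx.2.trans hv⟩
  have hyI : y ∈ Set.Icc (0:ℝ) 1 := ⟨hu.trans hy.1, hy.2.trans hv⟩
  have hzI : p * x + q * y ∈ Set.Icc (0:ℝ) 1 := by
    have := (convex_Icc (0:ℝ) 1) hxI hyI hp hq hpq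
    simpa using this
  have hsx := hasSum_F T hgi hP2 hxI
  have hsy := hasSum_F T hgi hP2 hyI
  have hsz := hasSum_F T hgi hP2 hzI
  have hcombo := (hsx.mul_left p).add (hsy.mul_left q)
  refine hasSum_le (fun i => ?_) hcombo hsz
  have := (hHconc i).2 hx hy hp hq hpq
  simp only [smul_eq_mul] at this
  have hcc : p * Fi g (T.a i) + q * Fi g (T.a i) = Fi g (T.a i) := by
    rw [← add_mul, hpq, one_mul]
  nlinarith [this, hcc]

/-! Part 5: abstract properties of the operator `P` from the integral identity. -/

lemma deriv_ge (i : ℕ) : ∀ x ∈ Set.Ioo (T.a i) (T.b i), T.da i ≤ deriv T.τ x := by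
  intro x hx
  have hmono := (T.conv i).monotoneOn_deriv (fun y hy => T.diff i y hy)
  refine le_of_tendsto (T.deriv_lim i) ?_
  have hmem : Set.Ioo (T.a i) x ∈ nhdsWithin (T.a i) (Set.Ioi (T.a i)) :=
    Ioo_mem_nhdsGT_of_mem ⟨le_refl _, hx.1⟩
  filter_upwards [hmem] with y hy
  exact hmono ⟨hy.1, hy.2.trans hx.2⟩ hx hy.2.le

lemma vol_preimage_branch {A : Set ℝ} (hA : MeasurableSet A) (i : ℕ) :
    volume (T.τ ⁻¹' A ∩ Set.Ioo (T.a i) (T.b i)) ≤ ENNReal.ofReal (1 / T.da i) * volume A := by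
  set B := T.τ ⁻¹' A ∩ Set.Ioo (T.a i) (T.b i) with hB
  have hBsub : B ⊆ Set.Ioo (T.a i) (T.b i) := Set.inter_subset_right
  have hcont : ContinuousOn T.τ (Set.Ioo (T.a i) (T.b i)) :=
    fun x hx => (T.diff i x hx).continuousAt.continuousWithinAt
  have hBmeas : MeasurableSet B := by
    have hrm : Measurable ((Set.Ioo (T.a i) (T.b i)).restrict T.τ) :=
      (continuousOn_iff_continuous_restrict.1 hcont).measurable
    have hBeq : B = Subtype.val '' ((Set.Ioo (T.a i) (T.b i)).restrict T.τ ⁻¹' A) := by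
      ext x
      simp only [hB, Set.mem_inter_iff, Set.mem_preimage, Set.mem_image, Set.restrict_apply]
      constructor
      · rintro ⟨hx1, hx2⟩; exact ⟨⟨x, hx2⟩, hx1, rfl⟩
      · rintro ⟨⟨y, hy⟩, hy2, rfl⟩; exact ⟨hy2, hy⟩
    rw [hBeq]
    exact MeasurableSet.subtype_image measurableSet_Ioo (hrm hA)
  have hder : ∀ x ∈ B, HasDerivWithinAt T.τ (deriv T.τ x) B x :=
    fun x hx => ((T.diff i x (hBsub hx)).hasDerivAt).hasDerivWithinAt
  have hinj : Set.InjOn T.τ B := ((T.mono i).injOn).mono hBsub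
  have himg : volume (T.τ '' B) = ∫⁻ x in B, ENNReal.ofReal |deriv T.τ x| := by
    have := MeasureTheory.lintegral_image_eq_lintegral_abs_det_fderiv_mul volume hBmeas
      (fun x hx => ((hder x hx).hasFDerivWithinAt)) hinj (fun _ => (1:ENNReal))
    simpa [ContinuousLinearMap.det_toSpanSingleton, MeasureTheory.lintegral_one,
      MeasureTheory.Measure.restrict_apply_univ] using this
  have h1 : ENNReal.ofReal (T.da i) * volume B ≤ volume (T.τ '' B) := by
    rw [himg, ← MeasureTheory.setLIntegral_const B (ENNReal.ofReal (T.da i))]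
    refine MeasureTheory.setLIntegral_mono_ae (by fun_prop) ?_
    refine Filter.Eventually.of_forall (fun x hx => ?_)
    refine ENNReal.ofReal_le_ofReal ?_
    have := deriv_ge T i x (hBsub hx)
    have h0 := (T.da_pos i).le
    rw [abs_of_nonneg (h0.trans this)]
    exact this
  have h2 : volume (T.τ '' B) ≤ volume A := by
    refine measure_mono ?_
    rintro y ⟨x, hx, rfl⟩
    exact hx.1
  have hda := T.da_pos i
  calc volume B = ENNReal.ofReal (1 / T.da i) * (ENNReal.ofReal (T.da i) * volume B) := by
        rw [← mul_assoc, ← ENNReal.ofReal_mul (by positivity), one_div_mul_cancel hda.ne',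
          ENNReal.ofReal_one, one_mul]
    _ ≤ ENNReal.ofReal (1 / T.da i) * volume A :=
        mul_le_mul_right (h1.trans h2) _

variable {P : (ℝ → ℝ) → (ℝ → ℝ)}

lemma P_congr
    (hP : ∀ f : ℝ → ℝ, MeasureTheory.IntegrableOn f (Set.Icc (0:ℝ) 1) →
      MeasureTheory.IntegrableOn (P f) (Set.Icc (0:ℝ) 1) ∧
      ∀ A : Set ℝ, MeasurableSet A → A ⊆ Set.Icc (0:ℝ) 1 →
        ∫ x in A, P f x = ∫ x in T.τ ⁻¹' A ∩ Set.Icc (0:ℝ) 1, f x)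
    {g₁ g₂ : ℝ → ℝ} (h1 : MeasureTheory.IntegrableOn g₁ (Set.Icc (0:ℝ) 1))
    (h2 : MeasureTheory.IntegrableOn g₂ (Set.Icc (0:ℝ) 1))
    (he : g₁ =ᵐ[volume.restrict (Set.Icc (0:ℝ) 1)] g₂) :
    P g₁ =ᵐ[volume.restrict (Set.Icc (0:ℝ) 1)] P g₂ := by
  refine MeasureTheory.ae_eq_of_forall_setIntegral_eq_of_sigmaFinite
    (fun s _ _ => (hP g₁ h1).1.integrableOn) (fun s _ _ => (hP g₂ h2).1.integrableOn) ?_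
  intro s hs _
  have hrw : ∀ h : ℝ → ℝ, ∫ x in s, h x ∂(volume.restrict (Set.Icc (0:ℝ) 1)) =
      ∫ x in s ∩ Set.Icc (0:ℝ) 1, h x := by
    intro h
    rw [MeasureTheory.Measure.restrict_restrict hs]
  rw [hrw, hrw, (hP g₁ h1).2 _ (hs.inter measurableSet_Icc) Set.inter_subset_right,
    (hP g₂ h2).2 _ (hs.inter measurableSet_Icc) Set.inter_subset_right]
  refine MeasureTheory.integral_congr_ae ?_
  exact he.filter_mono (MeasureTheory.ae_mono
    (MeasureTheory.Measure.restrict_mono Set.inter_subset_right le_rfl))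

lemma P_nonneg
    (hP : ∀ f : ℝ → ℝ, MeasureTheory.IntegrableOn f (Set.Icc (0:ℝ) 1) →
      MeasureTheory.IntegrableOn (P f) (Set.Icc (0:ℝ) 1) ∧
      ∀ A : Set ℝ, MeasurableSet A → A ⊆ Set.Icc (0:ℝ) 1 →
        ∫ x in A, P f x = ∫ x in T.τ ⁻¹' A ∩ Set.Icc (0:ℝ) 1, f x)
    {g : ℝ → ℝ} (h1 : MeasureTheory.IntegrableOn g (Set.Icc (0:ℝ) 1))
    (hg0 : 0 ≤ᵐ[volume.restrict (Set.Icc (0:ℝ) 1)] g) :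
    0 ≤ᵐ[volume.restrict (Set.Icc (0:ℝ) 1)] P g := by
  refine MeasureTheory.ae_nonneg_of_forall_setIntegral_nonneg (hP g h1).1 ?_
  intro s hs _
  rw [MeasureTheory.Measure.restrict_restrict hs,
    (hP g h1).2 _ (hs.inter measurableSet_Icc) Set.inter_subset_right]
  refine MeasureTheory.setIntegral_nonneg_of_ae_restrict ?_
  exact hg0.filter_mono (MeasureTheory.ae_mono
    (MeasureTheory.Measure.restrict_mono Set.inter_subset_right le_rfl))

lemma P_int
    (hP : ∀ f : ℝ → ℝ, MeasureTheory.IntegrableOn f (Set.Icc (0:ℝ) 1) →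
      MeasureTheory.IntegrableOn (P f) (Set.Icc (0:ℝ) 1) ∧
      ∀ A : Set ℝ, MeasurableSet A → A ⊆ Set.Icc (0:ℝ) 1 →
        ∫ x in A, P f x = ∫ x in T.τ ⁻¹' A ∩ Set.Icc (0:ℝ) 1, f x)
    {g : ℝ → ℝ} (h1 : MeasureTheory.IntegrableOn g (Set.Icc (0:ℝ) 1)) :
    ∫ x in Set.Icc (0:ℝ) 1, P g x = ∫ x in Set.Icc (0:ℝ) 1, g x := by
  have := (hP g h1).2 _ measurableSet_Icc (subset_refl _)
  rwa [show T.τ ⁻¹' Set.Icc (0:ℝ) 1 ∩ Set.Icc (0:ℝ) 1 = Set.Icc (0:ℝ) 1 from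
    Set.Subset.antisymm Set.inter_subset_right (fun x hx => ⟨T.maps_to hx, hx⟩)] at this

/-! Part 6: boundedness propagates under `P`. -/

lemma P_bdd
    (hP : ∀ f : ℝ → ℝ, MeasureTheory.IntegrableOn f (Set.Icc (0:ℝ) 1) →
      MeasureTheory.IntegrableOn (P f) (Set.Icc (0:ℝ) 1) ∧
      ∀ A : Set ℝ, MeasurableSet A → A ⊆ Set.Icc (0:ℝ) 1 →
        ∫ x in A, P f x = ∫ x in T.τ ⁻¹' A ∩ Set.Icc (0:ℝ) 1, f x)
    {g : ℝ → ℝ} (h1 : MeasureTheory.IntegrableOn g (Set.Icc (0:ℝ) 1))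
    {C : ℝ} (hC : 0 ≤ C) (hgC : ∀ᵐ x ∂(volume.restrict (Set.Icc (0:ℝ) 1)), g x ≤ C) :
    ∀ᵐ x ∂(volume.restrict (Set.Icc (0:ℝ) 1)), P g x ≤ C * (∑' i, 1 / T.da i) := by
  set c := ∑' i, 1 / T.da i with hc
  have hc0 : 0 ≤ c := tsum_nonneg (fun i => div_nonneg zero_le_one (T.da_pos i).le)
  have key : ∀ᵐ x ∂(volume.restrict (Set.Icc (0:ℝ) 1)), 0 ≤ C * c - P g x := by
    refine MeasureTheory.ae_nonneg_of_forall_setIntegral_nonneg ?_ ?_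
    · exact (MeasureTheory.integrable_const _).sub (hP g h1).1
    · intro s hs _
      have hint1 : MeasureTheory.Integrable (fun _ : ℝ => C * c)
          ((volume.restrict (Set.Icc (0:ℝ) 1)).restrict s) := MeasureTheory.integrable_const _
      have hint2 : MeasureTheory.Integrable (P g)
          ((volume.restrict (Set.Icc (0:ℝ) 1)).restrict s) := (hP g h1).1.integrableOn
      rw [MeasureTheory.integral_sub hint1 hint2]
      set A := s ∩ Set.Icc (0:ℝ) 1 with hA
      have hAmeas : MeasurableSet A := hs.inter measurableSet_Icc
      have hAsub : A ⊆ Set.Icc (0:ℝ) 1 := Set.inter_subset_right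
      have hAfin : volume A < ⊤ :=
        lt_of_le_of_lt (measure_mono hAsub) (by simp [Real.volume_Icc])
      have hPA : ∫ x in s, P g x ∂(volume.restrict (Set.Icc (0:ℝ) 1)) =
          ∫ x in T.τ ⁻¹' A ∩ Set.Icc (0:ℝ) 1, g x := by
        rw [MeasureTheory.Measure.restrict_restrict hs]
        exact (hP g h1).2 _ hAmeas hAsub
      -- replace preimage by union of branch pieces
      set U := ⋃ i, T.τ ⁻¹' A ∩ Set.Ioo (T.a i) (T.b i) with hU
      have hUmeas : MeasurableSet U := by
        refine MeasurableSet.iUnion (fun i => ?_)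
        have hcont : ContinuousOn T.τ (Set.Ioo (T.a i) (T.b i)) :=
          fun x hx => (T.diff i x hx).continuousAt.continuousWithinAt
        have hrm : Measurable ((Set.Ioo (T.a i) (T.b i)).restrict T.τ) :=
          (continuousOn_iff_continuous_restrict.1 hcont).measurable
        have hBeq : T.τ ⁻¹' A ∩ Set.Ioo (T.a i) (T.b i) =
            Subtype.val '' ((Set.Ioo (T.a i) (T.b i)).restrict T.τ ⁻¹' A) := by
          ext x
          simp only [Set.mem_inter_iff, Set.mem_preimage, Set.mem_image, Set.restrict_apply]
          constructor
          · rintro ⟨hx1, hx2⟩; exact ⟨⟨x, hx2⟩, hx1, rfl⟩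
          · rintro ⟨⟨y, hy⟩, hy2, rfl⟩; exact ⟨hy2, hy⟩
        rw [hBeq]
        exact MeasurableSet.subtype_image measurableSet_Ioo (hrm hAmeas)
      have hUsub : U ⊆ Set.Icc (0:ℝ) 1 :=
        Set.iUnion_subset (fun i => Set.inter_subset_right.trans (T.sub i))
      have hae : (T.τ ⁻¹' A ∩ Set.Icc (0:ℝ) 1 : Set ℝ) =ᵐ[volume] U := by
        rw [Filter.eventuallyEq_set]
        have hsub : {x | x ∈ T.τ ⁻¹' A ∩ Set.Icc (0:ℝ) 1 ↔ x ∈ U}ᶜ ⊆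
            Set.Icc (0:ℝ) 1 \ ⋃ i, Set.Ioo (T.a i) (T.b i) := by
          intro x hx
          simp only [Set.mem_compl_iff, Set.mem_setOf_eq] at hx
          by_contra hcon
          rw [Set.mem_diff] at hcon
          push_neg at hcon
          rcases Classical.em (x ∈ Set.Icc (0:ℝ) 1) with hxI | hxI
          · obtain ⟨i, hxi⟩ := Set.mem_iUnion.1 (hcon hxI)
            refine hx ⟨fun hxA => Set.mem_iUnion.2 ⟨i, hxA.1, hxi⟩, fun hxU => ?_⟩
            obtain ⟨i', hxi'⟩ := Set.mem_iUnion.1 hxU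
            exact ⟨hxi'.1, hxI⟩
          · refine hx ⟨fun hxA => absurd hxA.2 hxI, fun hxU => absurd (hUsub hxU) hxI⟩
        exact MeasureTheory.measure_mono_null hsub T.null
      have hUvol : volume U ≤ ENNReal.ofReal c * volume A := by
        refine le_trans (measure_iUnion_le _) ?_
        have hsum : (∑' i, volume (T.τ ⁻¹' A ∩ Set.Ioo (T.a i) (T.b i))) ≤
            ∑' i, ENNReal.ofReal (1 / T.da i) * volume A :=
          ENNReal.tsum_le_tsum (fun i => vol_preimage_branch T hAmeas i)
        refine hsum.trans (le_of_eq ?_)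
        rw [ENNReal.tsum_mul_right]
        congr 1
        rw [hc, ← ENNReal.ofReal_tsum_of_nonneg (fun i => div_nonneg zero_le_one (T.da_pos i).le) T.sum_inv]
      have hUfin : volume U < ⊤ :=
        lt_of_le_of_lt (measure_mono hUsub) (by simp [Real.volume_Icc])
      have hbound : ∫ x in T.τ ⁻¹' A ∩ Set.Icc (0:ℝ) 1, g x ≤ C * c * (volume A).toReal := by
        rw [MeasureTheory.setIntegral_congr_set hae]
        have hmono : ∫ x in U, g x ≤ ∫ x in U, (fun _ => C) x := by
          refine MeasureTheory.integral_mono_ae (h1.mono_set hUsub)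
            (MeasureTheory.integrableOn_const hUfin.ne) ?_
          exact hgC.filter_mono (MeasureTheory.ae_mono
            (MeasureTheory.Measure.restrict_mono hUsub le_rfl))
        refine hmono.trans ?_
        rw [MeasureTheory.setIntegral_const]
        simp only [smul_eq_mul]
        have htr : (volume U).toReal ≤ c * (volume A).toReal := by
          have := ENNReal.toReal_mono (by
            exact ENNReal.mul_ne_top ENNReal.ofReal_ne_top hAfin.ne) hUvol
          rwa [ENNReal.toReal_mul, ENNReal.toReal_ofReal hc0] at this
        calc (volume U).toReal * C ≤ (c * (volume A).toReal) * C :=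
              mul_le_mul_of_nonneg_right htr hC
          _ = C * c * (volume A).toReal := by ring
      have hconst : ∫ _ in s, (C * c) ∂(volume.restrict (Set.Icc (0:ℝ) 1)) =
          C * c * (volume A).toReal := by
        rw [MeasureTheory.Measure.restrict_restrict hs, MeasureTheory.setIntegral_const,
          smul_eq_mul, mul_comm, MeasureTheory.measureReal_def]
      rw [hconst, hPA]
      linarith [hbound]
  filter_upwards [key] with x hx
  linarith

/-! Part 7: concave primitive gives an antitone a.e. representative. -/

lemma slope_bound {g : ℝ → ℝ} (hgi : MeasureTheory.IntegrableOn g (Set.Icc (0:ℝ) 1))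
    {C : ℝ} (hgC : ∀ᵐ x ∂(volume.restrict (Set.Icc (0:ℝ) 1)), g x ≤ C)
    {u v : ℝ} (h0 : 0 ≤ u) (huv : u < v) (h1 : v ≤ 1) :
    Fi g v - Fi g u ≤ C * (v - u) := by
  rw [F_diff hgi h0 huv.le h1]
  have hsub : Set.Ioc u v ⊆ Set.Icc (0:ℝ) 1 := fun x hx => ⟨h0.trans hx.1.le, hx.2.trans h1⟩
  have hfin : volume (Set.Ioc u v) < ⊤ := by simp [Real.volume_Ioc]
  have hmono : ∫ x in Set.Ioc u v, g x ≤ ∫ x in Set.Ioc u v, (fun _ => C) x := by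
    refine MeasureTheory.integral_mono_ae (hgi.mono_set hsub)
      (MeasureTheory.integrableOn_const hfin.ne) ?_
    exact hgC.filter_mono (MeasureTheory.ae_mono
      (MeasureTheory.Measure.restrict_mono hsub le_rfl))
  refine hmono.trans ?_
  rw [MeasureTheory.setIntegral_const, smul_eq_mul, MeasureTheory.measureReal_def, Real.volume_Ioc,
    ENNReal.toReal_ofReal (by linarith)]
  rw [mul_comm]

lemma antitone_rep {g : ℝ → ℝ} (hgi : MeasureTheory.IntegrableOn g (Set.Icc (0:ℝ) 1))
    (hg0 : 0 ≤ᵐ[volume.restrict (Set.Icc (0:ℝ) 1)] g)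
    {C : ℝ} (hC : 0 ≤ C) (hgC : ∀ᵐ x ∂(volume.restrict (Set.Icc (0:ℝ) 1)), g x ≤ C)
    (hconc : ConcaveOn ℝ (Set.Icc (0:ℝ) 1) (Fi g)) :
    ∃ h : ℝ → ℝ, Antitone h ∧ (∀ x, 0 ≤ h x) ∧ (∀ x, h x ≤ C) ∧
      h =ᵐ[volume.restrict (Set.Icc (0:ℝ) 1)] g := by
  classical
  set F := Fi g with hF
  have hFmono := F_mono hgi hg0
  -- the slope sets
  set S : ℝ → Set ℝ := fun x => (fun u => (F x - F u) / (x - u)) '' (Set.Ico 0 x) with hSdef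
  have hslope_mem : ∀ x, 0 < x → ∀ u ∈ Set.Ico (0:ℝ) x, (F x - F u) / (x - u) ∈ S x :=
    fun x _ u hu => Set.mem_image_of_mem _ hu
  have hslope_nonneg : ∀ u v : ℝ, 0 ≤ u → u < v → v ≤ 1 → 0 ≤ (F v - F u) / (v - u) := by
    intro u v h0 huv h1
    refine div_nonneg (sub_nonneg.2 ?_) (by linarith)
    exact hFmono ⟨h0, by linarith⟩ ⟨by linarith, h1⟩ huv.le
  have hslope_le_C : ∀ u v : ℝ, 0 ≤ u → u < v → v ≤ 1 → (F v - F u) / (v - u) ≤ C := by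
    intro u v h0 huv h1
    rw [div_le_iff₀ (by linarith)]
    have := slope_bound hgi hgC h0 huv h1
    linarith
  have hne : ∀ x : ℝ, 0 < x → (S x).Nonempty :=
    fun x hx => ⟨(F x - F 0) / (x - 0), Set.mem_image_of_mem _ ⟨le_refl _, hx⟩⟩
  have hbddb : ∀ x : ℝ, 0 < x → x ≤ 1 → BddBelow (S x) := by
    intro x hx h1
    refine ⟨0, ?_⟩
    rintro s ⟨u, hu, rfl⟩
    exact hslope_nonneg u x hu.1 hu.2 h1
  set hfun : ℝ → ℝ := fun x => if x ≤ 0 then C else sInf (S (min x 1)) with hfdef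
  have hfun_eq : ∀ x : ℝ, 0 < x → x ≤ 1 → hfun x = sInf (S x) := by
    intro x hx h1
    simp only [hfdef, if_neg (not_le.2 hx), min_eq_left h1]
  have hfun_nonneg : ∀ x, 0 ≤ hfun x := by
    intro x
    by_cases hx : x ≤ 0
    · simp [hfdef, if_pos hx, hC]
    · push_neg at hx
      simp only [hfdef, if_neg (not_le.2 hx)]
      refine le_csInf (hne _ (lt_min hx one_pos)) ?_
      rintro s ⟨u, hu, rfl⟩
      exact hslope_nonneg u _ hu.1 hu.2 (min_le_right _ _)
  have hfun_le_C : ∀ x, hfun x ≤ C := by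
    intro x
    by_cases hx : x ≤ 0
    · simp [hfdef, if_pos hx]
    · push_neg at hx
      simp only [hfdef, if_neg (not_le.2 hx)]
      refine le_trans (csInf_le (hbddb _ (lt_min hx one_pos) (min_le_right _ _))
        (hslope_mem _ (lt_min hx one_pos) 0 ⟨le_refl _, lt_min hx one_pos⟩)) ?_
      exact hslope_le_C 0 _ (le_refl _) (lt_min hx one_pos) (min_le_right _ _)
  -- antitone
  have hanti_core : ∀ x y : ℝ, 0 < x → x < y → y ≤ 1 → sInf (S y) ≤ sInf (S x) := by
    intro x y hx hxy hy1
    have h1 : sInf (S y) ≤ (F y - F x) / (y - x) :=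
      csInf_le (hbddb y (hx.trans hxy) hy1) (hslope_mem y (hx.trans hxy) x ⟨hx.le, hxy⟩)
    refine h1.trans ?_
    refine le_csInf (hne x hx) ?_
    rintro s ⟨u, ⟨hu0, hux⟩, rfl⟩
    exact hconc.slope_anti_adjacent ⟨hu0, by linarith⟩ ⟨by linarith, hy1⟩ hux hxy
  have hAnti : Antitone hfun := by
    intro x y hxy
    by_cases hy : y ≤ 0
    · have hx : x ≤ 0 := hxy.trans hy
      simp [hfdef, if_pos hx, if_pos hy]
    · push_neg at hy
      by_cases hx : x ≤ 0
      · simp only [hfdef, if_pos hx, if_neg (not_le.2 hy)]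
        refine le_trans (csInf_le (hbddb _ (lt_min hy one_pos) (min_le_right _ _))
          (hslope_mem _ (lt_min hy one_pos) 0 ⟨le_refl _, lt_min hy one_pos⟩)) ?_
        exact hslope_le_C 0 _ (le_refl _) (lt_min hy one_pos) (min_le_right _ _)
      · push_neg at hx
        simp only [hfdef, if_neg (not_le.2 hx), if_neg (not_le.2 hy)]
        rcases eq_or_lt_of_le (min_le_min_right 1 hxy : min x 1 ≤ min y 1) with heq | hlt
        · rw [heq]
        · exact hanti_core _ _ (lt_min hx one_pos) hlt (min_le_right _ _)
  -- the two slope brackets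
  have hbrk1 : ∀ u v : ℝ, 0 ≤ u → u < v → v ≤ 1 → hfun v * (v - u) ≤ F v - F u := by
    intro u v h0 huv h1
    rw [hfun_eq v (lt_of_le_of_lt h0 huv) h1]
    have := csInf_le (hbddb v (lt_of_le_of_lt h0 huv) h1)
      (hslope_mem v (lt_of_le_of_lt h0 huv) u ⟨h0, huv⟩)
    have h2 := (le_div_iff₀ (by linarith : (0:ℝ) < v - u)).1 this
    linarith
  have hbrk2 : ∀ u v : ℝ, 0 < u → u < v → v ≤ 1 → F v - F u ≤ hfun u * (v - u) := by
    intro u v h0 huv h1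
    rw [hfun_eq u h0 (by linarith)]
    have h2 : (F v - F u) / (v - u) ≤ sInf (S u) := by
      refine le_csInf (hne u h0) ?_
      rintro s ⟨w, ⟨hw0, hwu⟩, rfl⟩
      exact hconc.slope_anti_adjacent ⟨hw0, by linarith⟩ ⟨by linarith, h1⟩ hwu huv
    rw [div_le_iff₀ (by linarith)] at h2
    linarith
  refine ⟨hfun, hAnti, hfun_nonneg, hfun_le_C, ?_⟩
  -- Lebesgue differentiation
  set g₁ : ℝ → ℝ := (Set.Icc (0:ℝ) 1).indicator g with hg₁def
  have hg₁int : MeasureTheory.Integrable g₁ volume :=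
    hgi.integrable_indicator measurableSet_Icc
  have hLeb := IsUnifLocDoublingMeasure.ae_tendsto_average (μ := (volume : Measure ℝ))
    hg₁int.locallyIntegrable 1
  have hLeb' := MeasureTheory.ae_restrict_of_ae (μ := (volume : Measure ℝ))
    (s := Set.Icc (0:ℝ) 1) hLeb
  have hcont_ae : ∀ᵐ x ∂(volume.restrict (Set.Icc (0:ℝ) 1)), ContinuousAt hfun x := by
    have hcnt := hAnti.countable_not_continuousAt
    have hnull : (volume.restrict (Set.Icc (0:ℝ) 1)) {x | ¬ContinuousAt hfun x} = 0 :=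
      le_antisymm (le_trans (MeasureTheory.Measure.restrict_le_self _)
        (le_of_eq (hcnt.measure_zero volume))) zero_le
    exact (MeasureTheory.measure_eq_zero_iff_ae_notMem.1 hnull).mono (fun x hx => not_not.1 hx)
  have hIoo_ae : ∀ᵐ x ∂(volume.restrict (Set.Icc (0:ℝ) 1)), x ∈ Set.Ioo (0:ℝ) 1 := by
    have h01 : (volume.restrict (Set.Icc (0:ℝ) 1)) ({0, 1} : Set ℝ) = 0 := by
      rw [MeasureTheory.Measure.restrict_apply ((measurableSet_singleton (1:ℝ)).insert 0)]
      refine MeasureTheory.measure_mono_null Set.inter_subset_left ?_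
      exact ((Set.countable_singleton (1:ℝ)).insert 0).measure_zero volume
    have h1 := MeasureTheory.measure_eq_zero_iff_ae_notMem.1 h01
    have h2 := MeasureTheory.ae_restrict_mem (μ := (volume : Measure ℝ))
      (measurableSet_Icc : MeasurableSet (Set.Icc (0:ℝ) 1))
    filter_upwards [h1, h2] with x hx1 hx2
    simp only [Set.mem_insert_iff, Set.mem_singleton_iff, not_or] at hx1
    exact ⟨lt_of_le_of_ne hx2.1 (Ne.symm hx1.1), lt_of_le_of_ne hx2.2 hx1.2⟩
  filter_upwards [hcont_ae, hLeb', hIoo_ae] with x hcx hlx hxIoo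
  -- pointwise identification
  have hxI : x ∈ Set.Icc (0:ℝ) 1 := ⟨hxIoo.1.le, hxIoo.2.le⟩
  have hg₁x : g₁ x = g x := Set.indicator_of_mem hxI g
  have hten : Tendsto (fun r : ℝ => ⨍ y in Metric.closedBall x r, g₁ y) (𝓝[>] 0) (𝓝 (g₁ x)) := by
    refine hlx (fun _ => x) id tendsto_id ?_
    filter_upwards [self_mem_nhdsWithin] with r hr
    exact Metric.mem_closedBall_self (by simpa using (le_of_lt hr))
  have hρ : 0 < min x (1 - x) := lt_min hxIoo.1 (by linarith [hxIoo.2])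
  have havg : ∀ r : ℝ, 0 < r → r < min x (1 - x) →
      ⨍ y in Metric.closedBall x r, g₁ y = (F (x + r) - F (x - r)) / (2 * r) := by
    intro r hr hrρ
    have hxr0 : 0 < x - r := by
      linarith [lt_of_lt_of_le hrρ (min_le_left x (1-x))]
    have hxr1 : x + r ≤ 1 := by
      linarith [lt_of_lt_of_le hrρ (min_le_right x (1-x))]
    rw [Real.closedBall_eq_Icc, MeasureTheory.setAverage_eq,
      MeasureTheory.integral_Icc_eq_integral_Ioc]
    have hsub : Set.Ioc (x - r) (x + r) ⊆ Set.Icc (0:ℝ) 1 :=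
      fun y hy => ⟨le_trans hxr0.le hy.1.le, hy.2.trans hxr1⟩
    have hind : ∫ y in Set.Ioc (x - r) (x + r), g₁ y = ∫ y in Set.Ioc (x - r) (x + r), g y := by
      refine MeasureTheory.setIntegral_congr_fun measurableSet_Ioc ?_
      exact fun y hy => Set.indicator_of_mem (hsub hy) g
    rw [hind, ← F_diff hgi (by linarith) (by linarith) hxr1]
    rw [MeasureTheory.measureReal_def, Real.volume_Icc, show x + r - (x - r) = 2 * r by ring,
      ENNReal.toReal_ofReal (by linarith), smul_eq_mul]
    rw [inv_mul_eq_div]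
  have hev : Set.Ioo (0:ℝ) (min x (1 - x)) ∈ 𝓝[>] (0:ℝ) := Ioo_mem_nhdsGT_of_mem ⟨le_refl _, hρ⟩
  have htplus : Tendsto (fun r : ℝ => hfun (x + r)) (𝓝[>] 0) (𝓝 (hfun x)) := by
    refine hcx.tendsto.comp ?_
    have : Tendsto (fun r : ℝ => x + r) (𝓝 0) (𝓝 x) := by
      simpa using (continuous_id.tendsto (0:ℝ)).const_add x
    exact this.mono_left nhdsWithin_le_nhds
  have htminus : Tendsto (fun r : ℝ => hfun (x - r)) (𝓝[>] 0) (𝓝 (hfun x)) := by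
    refine hcx.tendsto.comp ?_
    have : Tendsto (fun r : ℝ => x - r) (𝓝 0) (𝓝 x) := by
      simpa using (continuous_id.tendsto (0:ℝ)).const_sub x
    exact this.mono_left nhdsWithin_le_nhds
  have hle1 : g₁ x ≤ hfun x := by
    refine le_of_tendsto_of_tendsto hten htminus ?_
    filter_upwards [hev] with r hr
    have hr0 : 0 < r := hr.1
    have hxr0 : 0 < x - r := by linarith [lt_of_lt_of_le hr.2 (min_le_left x (1-x))]
    have hxr1 : x + r ≤ 1 := by linarith [lt_of_lt_of_le hr.2 (min_le_right x (1-x))]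
    rw [havg r hr.1 hr.2]
    have := hbrk2 (x - r) (x + r) hxr0 (by linarith) hxr1
    rw [div_le_iff₀ (by linarith : (0:ℝ) < 2 * r)]
    calc F (x + r) - F (x - r) ≤ hfun (x - r) * (x + r - (x - r)) := this
      _ = hfun (x - r) * (2 * r) := by ring_nf
  have hle2 : hfun x ≤ g₁ x := by
    refine le_of_tendsto_of_tendsto htplus hten ?_
    filter_upwards [hev] with r hr
    have hr0 : 0 < r := hr.1
    have hxr0 : 0 < x - r := by linarith [lt_of_lt_of_le hr.2 (min_le_left x (1-x))]
    have hxr1 : x + r ≤ 1 := by linarith [lt_of_lt_of_le hr.2 (min_le_right x (1-x))]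
    rw [havg r hr.1 hr.2]
    have := hbrk1 (x - r) (x + r) hxr0.le (by linarith) hxr1
    rw [le_div_iff₀ (by linarith : (0:ℝ) < 2 * r)]
    calc hfun (x + r) * (2 * r) = hfun (x + r) * (x + r - (x - r)) := by ring_nf
      _ ≤ F (x + r) - F (x - r) := this
  rw [← hg₁x]
  exact le_antisymm hle2 hle1

/-! Part 8: the initial step function. -/

lemma concaveOn_congr {s : Set ℝ} {f g : ℝ → ℝ} (hs : Convex ℝ s) (h : ConcaveOn ℝ s f)
    (he : Set.EqOn f g s) : ConcaveOn ℝ s g := by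
  refine ⟨hs, ?_⟩
  intro a ha b hb w z hw hz hwz
  rw [← he ha, ← he hb, ← he (hs ha hb hw hz hwz)]
  exact h.2 ha hb hw hz hwz

lemma vol_term_eq (p q t : ℝ) :
    (volume (Set.Ioc 0 t ∩ Set.Icc p q)).toReal = max (min t q - max 0 p) 0 := by
  have hBA : Set.Ioc (max 0 p) (min t q) ⊆ Set.Ioc 0 t ∩ Set.Icc p q := by
    intro x hx
    rcases hx with ⟨hx1, hx2⟩
    rw [max_lt_iff] at hx1
    rw [le_min_iff] at hx2
    exact ⟨⟨hx1.1, hx2.1⟩, hx1.2.le, hx2.2⟩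
  have hAB : Set.Ioc 0 t ∩ Set.Icc p q ⊆ Set.Ioc (max 0 p) (min t q) ∪ {p} := by
    intro x hx
    rcases Classical.em (max 0 p < x) with h | h
    · exact Or.inl ⟨h, le_min hx.1.2 hx.2.2⟩
    · push_neg at h
      rcases le_max_iff.1 h with h1 | h1
      · exact absurd hx.1.1 (not_lt.2 h1)
      · exact Or.inr (le_antisymm h1 hx.2.1)
  have hvol : volume (Set.Ioc 0 t ∩ Set.Icc p q) = volume (Set.Ioc (max 0 p) (min t q)) := by
    refine le_antisymm ?_ (measure_mono hBA)
    refine le_trans (measure_mono hAB) ?_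
    refine le_trans (measure_union_le _ _) ?_
    simp
  rw [hvol, Real.volume_Ioc, ENNReal.toReal_ofReal']

lemma base_term_concave (p q : ℝ) {u v : ℝ} (hu : 0 ≤ u) (hp : p ∉ Set.Ioo u v) :
    ConcaveOn ℝ (Set.Icc u v)
      (fun t => (volume (Set.Ioc 0 t ∩ Set.Icc p q)).toReal) := by
  rcases le_or_gt v u with hvu | huv
  · -- degenerate interval
    refine ⟨convex_Icc _ _, ?_⟩
    intro a ha b hb w z hw hz hwz
    have hab : a = b := le_antisymm (ha.2.trans (hvu.trans hb.1)) (hb.2.trans (hvu.trans ha.1))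
    have hcombo : w • a + z • b = a := by
      rw [hab]; simp only [smul_eq_mul]; rw [← add_mul, hwz, one_mul]
    rw [hcombo, hab]
    simp only [smul_eq_mul]
    rw [← add_mul, hwz, one_mul]
  have hcases : v ≤ p ∨ p ≤ u := by
    by_contra hcon
    push_neg at hcon
    exact hp ⟨hcon.2, hcon.1⟩
  rcases hcases with hcase | hcase
  · -- the set is null on [u,v]
    refine concaveOn_congr (convex_Icc _ _) (concaveOn_const 0 (convex_Icc _ _)) ?_
    intro t ht
    show (0:ℝ) = (volume (Set.Ioc 0 t ∩ Set.Icc p q)).toReal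
    rw [vol_term_eq]
    have h1 : min t q - max 0 p ≤ 0 := by
      have := min_le_left t q
      have := le_max_right 0 p
      have := ht.2
      linarith
    exact (max_eq_right h1).symm
  · rcases lt_or_ge q (max 0 p) with hq | hq
    · -- q below the left endpoint : null again
      refine concaveOn_congr (convex_Icc _ _) (concaveOn_const 0 (convex_Icc _ _)) ?_
      intro t ht
      show (0:ℝ) = (volume (Set.Ioc 0 t ∩ Set.Icc p q)).toReal
      rw [vol_term_eq]
      have h1 : min t q - max 0 p ≤ 0 := by
        have := min_le_right t q
        linarith
      exact (max_eq_right h1).symm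
    · -- active case
      have hactive : ∀ t ∈ Set.Icc u v,
          (volume (Set.Ioc 0 t ∩ Set.Icc p q)).toReal = min t q - max 0 p := by
        intro t ht
        rw [vol_term_eq]
        have h1 : max 0 p ≤ min t q := by
          refine le_min ?_ hq
          exact max_le (hu.trans ht.1) (hcase.trans ht.1)
        exact max_eq_left (by linarith)
      refine concaveOn_congr (convex_Icc _ _) ?_ (fun t ht => (hactive t ht).symm)
      refine ⟨convex_Icc _ _, ?_⟩
      intro a ha b hb w z hw hz hwz
      simp only [smul_eq_mul]
      have h1 : w * min a q + z * min b q ≤ min (w * a + z * b) q := by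
        refine le_min ?_ ?_
        · exact add_le_add (mul_le_mul_of_nonneg_left (min_le_left _ _) hw)
            (mul_le_mul_of_nonneg_left (min_le_left _ _) hz)
        · calc w * min a q + z * min b q ≤ w * q + z * q :=
                add_le_add (mul_le_mul_of_nonneg_left (min_le_right _ _) hw)
                  (mul_le_mul_of_nonneg_left (min_le_right _ _) hz)
            _ = q := by rw [← add_mul, hwz, one_mul]
      have h2 : w * max 0 p + z * max 0 p = max 0 p := by rw [← add_mul, hwz, one_mul]
      nlinarith [h1, h2]

lemma base_F_eq {Nn : ℕ} (cf : Fin Nn → ℝ) (pf qf : Fin Nn → ℝ)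
    {t : ℝ} :
    Fi (fun x => ∑ j, cf j * Set.indicator (Set.Icc (pf j) (qf j)) (fun _ => (1:ℝ)) x) t =
      ∑ j, cf j * (volume (Set.Ioc 0 t ∩ Set.Icc (pf j) (qf j))).toReal := by
  rw [Fi]
  rw [MeasureTheory.integral_finset_sum]
  · refine Finset.sum_congr rfl (fun j _ => ?_)
    rw [MeasureTheory.integral_const_mul]
    congr 1
    rw [MeasureTheory.setIntegral_indicator measurableSet_Icc]
    simp [MeasureTheory.setIntegral_const, MeasureTheory.measureReal_def]
  · intro j _
    refine MeasureTheory.Integrable.const_mul ?_ _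
    have hfin : (volume.restrict (Set.Ioc (0:ℝ) t)) (Set.Icc (pf j) (qf j)) < ⊤ :=
      lt_of_le_of_lt (MeasureTheory.Measure.restrict_apply_le _ _) (by simp [Real.volume_Icc])
    exact (MeasureTheory.integrableOn_const hfin.ne).integrable_indicator
      measurableSet_Icc

lemma PWC_mono {J J' : Set ℝ} {F : ℝ → ℝ} (h : J ⊆ J') (hF : PWC J F) : PWC J' F :=
  fun u v hu hv hgap => hF u v hu hv (fun j hj => hgap j (h hj))

lemma base_PWC {Nn : ℕ} (cf : Fin Nn → ℝ) (hcf : ∀ j, 0 ≤ cf j) (pf qf : Fin Nn → ℝ) :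
    PWC (Set.range pf)
      (Fi (fun x => ∑ j, cf j * Set.indicator (Set.Icc (pf j) (qf j)) (fun _ => (1:ℝ)) x)) := by
  intro u v hu hv hgap
  have hterm : ∀ j, ConcaveOn ℝ (Set.Icc u v)
      (fun t => (volume (Set.Ioc 0 t ∩ Set.Icc (pf j) (qf j))).toReal) :=
    fun j => base_term_concave (pf j) (qf j) hu (hgap (pf j) (Set.mem_range_self j))
  refine ⟨convex_Icc _ _, ?_⟩
  intro a ha b hb w z hw hz hwz
  simp only [smul_eq_mul]
  rw [base_F_eq, base_F_eq, base_F_eq]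
  rw [Finset.mul_sum, Finset.mul_sum, ← Finset.sum_add_distrib]
  refine Finset.sum_le_sum (fun j _ => ?_)
  have h1 := (hterm j).2 ha hb hw hz hwz
  simp only [smul_eq_mul] at h1
  have h2 := mul_le_mul_of_nonneg_left h1 (hcf j)
  nlinarith [h2]


end LFAux

open LFAux in
set_option maxHeartbeats 2000000 in
/-- lower-function construction in the proof of Theorem 2.2.9. Let
`τ ∈ 𝒯` with Frobenius–Perron operator `P`, and constants `α ∈ (0,1)`, `D > 0` with
`‖P f‖_∞ ≤ α‖f‖_∞ + D‖f‖₁` for all nonnegative non-increasing `f ∈ L¹ ∩ L^∞`; set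
`K = 1 + D/(1−α)` and `S = ⋃ₙ τ⁻ⁿ({aᵢ, bᵢ})`. Then for every probability density `f`
which is a finite nonnegative combination `f = Σⱼ cⱼ χ_{Δⱼ}` of indicators of intervals
with endpoints in `S`, there is `n₁` such that for all `n ≥ n₁`,
`P ⁿ f ≥ (1/2)·χ_{[0,1/(2K)]}` a.e. on `I`; i.e. `h = (1/2)·χ_{[0,1/(2K)]}` is a lower
function for `P_τ`. -/
theorem lower_function_for_frobeniusPerron (T : PCT) (P : (ℝ → ℝ) → (ℝ → ℝ))
    (hP : ∀ f : ℝ → ℝ, MeasureTheory.IntegrableOn f (Set.Icc (0:ℝ) 1) →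
      MeasureTheory.IntegrableOn (P f) (Set.Icc (0:ℝ) 1) ∧
      ∀ A : Set ℝ, MeasurableSet A → A ⊆ Set.Icc (0:ℝ) 1 →
        ∫ x in A, P f x = ∫ x in T.τ ⁻¹' A ∩ Set.Icc (0:ℝ) 1, f x)
    (α D : ℝ) (hα0 : 0 < α) (hα1 : α < 1) (hD : 0 < D)
    (hLY : ∀ f : ℝ → ℝ, (∀ x ∈ Set.Icc (0:ℝ) 1, 0 ≤ f x) →
      AntitoneOn f (Set.Icc (0:ℝ) 1) →
      MeasureTheory.IntegrableOn f (Set.Icc (0:ℝ) 1) →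
      MeasureTheory.eLpNorm f ⊤ (volume.restrict (Set.Icc (0:ℝ) 1)) < ⊤ →
      MeasureTheory.eLpNorm (P f) ⊤ (volume.restrict (Set.Icc (0:ℝ) 1)) ≤
        ENNReal.ofReal α * MeasureTheory.eLpNorm f ⊤ (volume.restrict (Set.Icc (0:ℝ) 1)) +
        ENNReal.ofReal D * MeasureTheory.eLpNorm f 1 (volume.restrict (Set.Icc (0:ℝ) 1)))
    (K : ℝ) (hK : K = 1 + D / (1 - α))
    (S : Set ℝ) (hS : S = ⋃ n : ℕ, T.τ^[n] ⁻¹' (Set.range T.a ∪ Set.range T.b))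
    (N : ℕ) (Δ : Fin N → Set ℝ) (cf : Fin N → ℝ) (hcf : ∀ j, 0 ≤ cf j)
    (hΔ : ∀ j, ∃ p q : ℝ, p ∈ S ∧ q ∈ S ∧ Δ j = Set.Icc p q)
    (f : ℝ → ℝ) (hf : f = fun x => ∑ j, cf j * Set.indicator (Δ j) (fun _ => (1:ℝ)) x)
    (hf1 : ∫ x in Set.Icc (0:ℝ) 1, f x = 1) :
    ∃ n₁ : ℕ, ∀ n ≥ n₁,
      ∀ᵐ x ∂(volume.restrict (Set.Icc (0:ℝ) 1)),
        Set.indicator (Set.Icc (0:ℝ) (1 / (2 * K))) (fun _ => (1:ℝ)/2) x ≤ P^[n] f x := by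
  classical
  choose pf qf hpS hqS hΔeq using hΔ
  have hfeq : f = fun x => ∑ j, cf j *
      Set.indicator (Set.Icc (pf j) (qf j)) (fun _ => (1:ℝ)) x := by
    rw [hf]
    funext x
    exact Finset.sum_congr rfl (fun j _ => by rw [hΔeq j])
  clear hf
  have hdepth : ∀ j, ∃ d : ℕ, T.τ^[d] (pf j) ∈ Set.range T.a ∪ Set.range T.b := by
    intro j
    have := hpS j
    rw [hS] at this
    simpa [Set.mem_iUnion] using this
  choose dfun hdfun using hdepth
  set n₀ : ℕ := (Finset.univ.sup dfun) + 1 with hn₀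
  set U : Set ℝ := ⋃ i, Set.Ioo (T.a i) (T.b i) with hUdef
  set Jseq : ℕ → Set ℝ :=
    fun n => {x | ∃ j : Fin N, x = T.τ^[n] (pf j) ∧ ∀ m < n, T.τ^[m] (pf j) ∈ U} with hJseq
  set M₀ : ℝ := ∑ j, cf j with hM₀
  set c₀ : ℝ := ∑' i, 1 / T.da i with hc₀
  have hM₀0 : 0 ≤ M₀ := Finset.sum_nonneg (fun j _ => hcf j)
  have hc₀0 : 0 ≤ c₀ := tsum_nonneg (fun i => div_nonneg zero_le_one (T.da_pos i).le)
  set II : Set ℝ := Set.Icc (0:ℝ) 1 with hII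
  set μI := volume.restrict II with hμI
  -- basic facts about f
  have hfi : MeasureTheory.IntegrableOn f II := by
    rw [hfeq]
    refine MeasureTheory.integrable_finset_sum _ (fun j _ => ?_)
    refine MeasureTheory.Integrable.const_mul ?_ _
    have hfin : μI (Set.Icc (pf j) (qf j)) < ⊤ :=
      lt_of_le_of_lt (MeasureTheory.Measure.restrict_apply_le _ _) (by simp [Real.volume_Icc])
    exact (MeasureTheory.integrableOn_const hfin.ne).integrable_indicator
      measurableSet_Icc
  have hf0 : ∀ x, 0 ≤ f x := by
    intro x
    rw [hfeq]
    refine Finset.sum_nonneg (fun j _ => mul_nonneg (hcf j) ?_)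
    exact Set.indicator_apply_nonneg (fun _ => zero_le_one)
  have hfM : ∀ x, f x ≤ M₀ := by
    intro x
    rw [hfeq, hM₀]
    refine Finset.sum_le_sum (fun j _ => ?_)
    have : Set.indicator (Set.Icc (pf j) (qf j)) (fun _ => (1:ℝ)) x ≤ 1 :=
      Set.indicator_apply_le' (fun _ => le_refl 1) (fun _ => zero_le_one)
    nlinarith [hcf j, this]
  -- the main induction
  have hQ : ∀ n, MeasureTheory.IntegrableOn (P^[n] f) II ∧ (0 ≤ᵐ[μI] P^[n] f) ∧
      (∫ x in II, P^[n] f x = 1) ∧ (∀ᵐ x ∂μI, P^[n] f x ≤ M₀ * c₀ ^ n) ∧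
      PWC (Jseq n) (Fi (P^[n] f)) := by
    intro n
    induction n with
    | zero =>
      simp only [Function.iterate_zero, id_eq]
      refine ⟨hfi, Filter.Eventually.of_forall hf0, hf1, ?_, ?_⟩
      · refine Filter.Eventually.of_forall (fun x => ?_)
        rw [pow_zero, mul_one]
        exact hfM x
      · refine PWC_mono ?_ (by rw [hfeq]; exact base_PWC cf hcf pf qf)
        rintro x ⟨j, rfl⟩
        exact ⟨j, by simp, fun m hm => absurd hm (Nat.not_lt_zero m)⟩
    | succ n ih =>
      obtain ⟨h1, h2, h3, h4, h5⟩ := ih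
      rw [Function.iterate_succ_apply']
      refine ⟨(hP _ h1).1, P_nonneg T hP h1 h2, (P_int T hP h1).trans h3, ?_, ?_⟩
      · have hb := P_bdd T hP h1 (mul_nonneg hM₀0 (pow_nonneg hc₀0 n)) h4
        filter_upwards [hb] with x hx
        calc P (P^[n] f) x ≤ M₀ * c₀ ^ n * c₀ := hx
          _ = M₀ * c₀ ^ (n + 1) := by rw [pow_succ]; ring
      · refine PWC_mono ?_ (comp_PWC T h1 h2 (fun A hA hAs => (hP _ h1).2 A hA hAs) h5)
        rintro x ⟨y, ⟨⟨j, rfl, hall⟩, hyU⟩, rfl⟩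
        refine ⟨j, (Function.iterate_succ_apply' T.τ n (pf j)).symm, ?_⟩
        intro m hm
        rcases Nat.lt_succ_iff_lt_or_eq.1 hm with hlt | heq
        · exact hall m hlt
        · rw [heq]; exact hyU
  -- kinks vanish beyond n₀
  have hJempty : ∀ n, n₀ ≤ n → Jseq n = ∅ := by
    intro n hn
    ext x
    simp only [hJseq, Set.mem_setOf_eq, Set.mem_empty_iff_false, iff_false, not_exists]
    rintro j ⟨-, hall⟩
    have hd : dfun j < n :=
      lt_of_lt_of_le (Nat.lt_succ_of_le (Finset.le_sup (Finset.mem_univ j))) hn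
    have hmem := hall (dfun j) hd
    rcases hdfun j with ⟨i, hi⟩ | ⟨i, hi⟩
    · obtain ⟨i', hi'⟩ := Set.mem_iUnion.1 hmem
      rw [← hi] at hi'
      exact a_not_mem_Ioo T i i' hi'
    · obtain ⟨i', hi'⟩ := Set.mem_iUnion.1 hmem
      rw [← hi] at hi'
      exact b_not_mem_Ioo T i i' hi'
  have hconc : ∀ n, n₀ ≤ n → ConcaveOn ℝ II (Fi (P^[n] f)) := by
    intro n hn
    have := (hQ n).2.2.2.2
    rw [hJempty n hn] at this
    exact this 0 1 le_rfl le_rfl (by simp)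
  have hrep : ∀ n, n₀ ≤ n → ∃ h : ℝ → ℝ, Antitone h ∧ (∀ x, 0 ≤ h x) ∧
      (∀ x, h x ≤ M₀ * c₀ ^ n) ∧ h =ᵐ[μI] P^[n] f :=
    fun n hn => antitone_rep (hQ n).1 (hQ n).2.1
      (mul_nonneg hM₀0 (pow_nonneg hc₀0 n)) (hQ n).2.2.2.1 (hconc n hn)
  -- ‖·‖_∞ recursion
  set B : ℕ → ENNReal := fun n => MeasureTheory.eLpNorm (P^[n] f) ⊤ μI with hBdef
  have hBabs : ∀ n, ∀ᵐ x ∂μI, ‖P^[n] f x‖ ≤ M₀ * c₀ ^ n := by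
    intro n
    filter_upwards [(hQ n).2.1, (hQ n).2.2.2.1] with x hx1 hx2
    rw [Real.norm_eq_abs, abs_of_nonneg hx1]
    exact hx2
  have hBfin : ∀ n, B n ≤ ENNReal.ofReal (M₀ * c₀ ^ n) := by
    intro n
    refine le_trans (MeasureTheory.eLpNorm_le_of_ae_bound (hBabs n)) ?_
    rw [ENNReal.toReal_top, inv_zero, ENNReal.rpow_zero, one_mul]
  have hBstep : ∀ n, n₀ ≤ n → B (n + 1) ≤
      ENNReal.ofReal α * B n + ENNReal.ofReal D := by
    intro n hn
    obtain ⟨h, hanti, h0, hCb, hae⟩ := hrep n hn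
    have hint : MeasureTheory.IntegrableOn h II := ((hQ n).1).congr hae.symm
    have hsup : MeasureTheory.eLpNorm h ⊤ μI < ⊤ := by
      refine lt_of_le_of_lt (MeasureTheory.eLpNorm_le_of_ae_bound
        (C := M₀ * c₀ ^ n) ?_) ?_
      · refine Filter.Eventually.of_forall (fun x => ?_)
        rw [Real.norm_eq_abs, abs_of_nonneg (h0 x)]
        exact hCb x
      · rw [ENNReal.toReal_top, inv_zero, ENNReal.rpow_zero, one_mul]
        exact ENNReal.ofReal_lt_top
    have hLYapp := hLY h (fun x _ => h0 x) (hanti.antitoneOn _) hint hsup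
    have e1 : MeasureTheory.eLpNorm h ⊤ μI = B n := MeasureTheory.eLpNorm_congr_ae hae
    have e2 : MeasureTheory.eLpNorm (P h) ⊤ μI = B (n + 1) := by
      have hPe : P h =ᵐ[μI] P (P^[n] f) := P_congr T hP hint (hQ n).1 hae
      rw [MeasureTheory.eLpNorm_congr_ae hPe, hBdef]
      simp only [Function.iterate_succ_apply']
    have e3 : MeasureTheory.eLpNorm h 1 μI = ENNReal.ofReal 1 := by
      rw [MeasureTheory.eLpNorm_one_eq_lintegral_enorm]
      have hl : ∫⁻ x, ‖h x‖ₑ ∂μI = ∫⁻ x, ENNReal.ofReal (h x) ∂μI := by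
        refine MeasureTheory.lintegral_congr (fun x => ?_)
        rw [← ofReal_norm, Real.norm_eq_abs, abs_of_nonneg (h0 x)]
      rw [hl, ← MeasureTheory.ofReal_integral_eq_lintegral_ofReal hint
        (Filter.Eventually.of_forall h0)]
      congr 1
      rw [MeasureTheory.integral_congr_ae hae]
      exact (hQ n).2.2.1
    rw [e1, e2, e3] at hLYapp
    refine hLYapp.trans ?_
    rw [ENNReal.ofReal_one, mul_one]
  have hDdiv : 0 ≤ D / (1 - α) := div_nonneg hD.le (by linarith)
  have hBiter : ∀ k, B (n₀ + k) ≤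
      ENNReal.ofReal (α ^ k * (M₀ * c₀ ^ n₀)) + ENNReal.ofReal (D / (1 - α)) := by
    intro k
    induction k with
    | zero =>
      simp only [Nat.add_zero, pow_zero, one_mul]
      exact le_trans (hBfin n₀) (le_add_right le_rfl)
    | succ k ih =>
      have h1 := hBstep (n₀ + k) (Nat.le_add_right n₀ k)
      rw [show n₀ + (k + 1) = n₀ + k + 1 by ring]
      refine h1.trans ?_
      have h2 : ENNReal.ofReal α * B (n₀ + k) ≤
          ENNReal.ofReal α * (ENNReal.ofReal (α ^ k * (M₀ * c₀ ^ n₀)) +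
            ENNReal.ofReal (D / (1 - α))) := mul_le_mul_right ih _
      refine le_trans (add_le_add_left h2 _) ?_
      rw [mul_add, ← ENNReal.ofReal_mul hα0.le, ← ENNReal.ofReal_mul hα0.le]
      rw [add_assoc, ← ENNReal.ofReal_add (by positivity) hD.le]
      have he1 : α * (α ^ k * (M₀ * c₀ ^ n₀)) = α ^ (k+1) * (M₀ * c₀ ^ n₀) := by
        rw [pow_succ]; ring
      have he2 : α * (D / (1 - α)) + D = D / (1 - α) := by
        have hne : (1:ℝ) - α ≠ 0 := by linarith
        field_simp
        ring
      rw [he1, he2]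
  obtain ⟨m, hm⟩ : ∃ m, α ^ m * (M₀ * c₀ ^ n₀) ≤ 1 := by
    obtain ⟨m, hm⟩ := exists_pow_lt_of_lt_one
      (show (0:ℝ) < 1 / (M₀ * c₀ ^ n₀ + 1) by positivity) hα1
    refine ⟨m, ?_⟩
    have h0 : (0:ℝ) ≤ α ^ m := pow_nonneg hα0.le m
    have h1 : 0 ≤ M₀ * c₀ ^ n₀ := mul_nonneg hM₀0 (pow_nonneg hc₀0 n₀)
    rw [lt_div_iff₀ (by positivity)] at hm
    nlinarith
  have hK1 : 1 ≤ K := by rw [hK]; linarith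
  have hKpos : (0:ℝ) < K := lt_of_lt_of_le one_pos hK1
  refine ⟨n₀ + m, ?_⟩
  intro n hn
  obtain ⟨k, rfl, hk⟩ : ∃ k, n = n₀ + k ∧ m ≤ k := ⟨n - n₀, by omega, by omega⟩
  have hBK : B (n₀ + k) ≤ ENNReal.ofReal K := by
    refine le_trans (hBiter k) ?_
    rw [← ENNReal.ofReal_add (by positivity) hDdiv, hK]
    refine ENNReal.ofReal_le_ofReal ?_
    have h1 : α ^ k ≤ α ^ m := pow_le_pow_of_le_one hα0.le hα1.le hk
    have h2 : α ^ k * (M₀ * c₀ ^ n₀) ≤ α ^ m * (M₀ * c₀ ^ n₀) :=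
      mul_le_mul_of_nonneg_right h1 (mul_nonneg hM₀0 (pow_nonneg hc₀0 n₀))
    linarith [h2.trans hm]
  obtain ⟨h, hanti, h0, hCb, hae⟩ := hrep (n₀ + k) (Nat.le_add_right n₀ k)
  -- a.e. bound by K
  have haeK : ∀ᵐ x ∂μI, P^[n₀ + k] f x ≤ K := by
    have h1 := MeasureTheory.ae_le_eLpNormEssSup (f := P^[n₀ + k] f) (μ := μI)
    have h2 : MeasureTheory.eLpNormEssSup (P^[n₀ + k] f) μI ≤ ENNReal.ofReal K := by
      rw [← MeasureTheory.eLpNorm_exponent_top]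
      exact hBK
    filter_upwards [h1] with x hx
    have h3 : (‖P^[n₀ + k] f x‖ₑ : ENNReal) ≤ ENNReal.ofReal K := le_trans hx h2
    rw [← ofReal_norm] at h3
    have h4 : ‖P^[n₀ + k] f x‖ ≤ K := by
      exact (ENNReal.ofReal_le_ofReal_iff hKpos.le).1 h3
    exact le_trans (le_abs_self _) (by rwa [Real.norm_eq_abs] at h4)
  have hhae : ∀ᵐ x ∂μI, h x ≤ K := by
    filter_upwards [hae, haeK] with x hx1 hx2
    rw [hx1]; exact hx2
  -- pointwise bound on (0,1]
  have hhK : ∀ x : ℝ, 0 < x → x ≤ 1 → h x ≤ K := by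
    intro x hx hx1
    by_contra hcon
    push_neg at hcon
    have hsub : Set.Ioo (0:ℝ) x ⊆ {y | ¬ h y ≤ K} := by
      intro y hy
      simp only [Set.mem_setOf_eq, not_le]
      exact lt_of_lt_of_le hcon (hanti hy.2.le)
    have hnull : μI {y | ¬ h y ≤ K} = 0 := by
      rw [← MeasureTheory.ae_iff] at *
      exact hhae
    have hpos : μI (Set.Ioo (0:ℝ) x) = ENNReal.ofReal x := by
      rw [hμI, MeasureTheory.Measure.restrict_apply measurableSet_Ioo]
      rw [show Set.Ioo (0:ℝ) x ∩ II = Set.Ioo 0 x from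
        Set.inter_eq_left.2 (fun y hy => ⟨hy.1.le, hy.2.le.trans hx1⟩)]
      simp [Real.volume_Ioo]
    have := MeasureTheory.measure_mono_null hsub hnull
    rw [hpos] at this
    exact absurd this (by simp [ENNReal.ofReal_eq_zero, not_le, hx])
  -- the density lower bound
  have hint : MeasureTheory.IntegrableOn h II := ((hQ (n₀ + k)).1).congr hae.symm
  have h1eq : ∫ y in II, h y = 1 := by
    rw [MeasureTheory.integral_congr_ae hae]
    exact (hQ (n₀ + k)).2.2.1
  have hhalf : ∀ x ∈ Set.Icc (0:ℝ) (1 / (2 * K)), (1:ℝ)/2 ≤ h x := by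
    by_contra hcon
    push_neg at hcon
    obtain ⟨x₀, hx₀mem, hx₀⟩ := hcon
    have hx₀0 : 0 ≤ x₀ := hx₀mem.1
    have hx₀le : x₀ ≤ 1 / (2 * K) := hx₀mem.2
    have h2K : 1 / (2 * K) < 1 := by
      rw [div_lt_one (by linarith)]
      linarith
    have hx₀lt1 : x₀ < 1 := lt_of_le_of_lt hx₀le h2K
    -- split the integral
    have hsplit : ∫ y in II, h y =
        (∫ y in Set.Ioc (0:ℝ) x₀, h y) + ∫ y in Set.Ioc x₀ 1, h y := by
      rw [hII, MeasureTheory.integral_Icc_eq_integral_Ioc,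
        ← Set.Ioc_union_Ioc_eq_Ioc hx₀0 hx₀lt1.le]
      refine MeasureTheory.setIntegral_union ?_ measurableSet_Ioc ?_ ?_
      · rw [Set.disjoint_left]
        intro y hy hy'
        exact absurd hy.2 (not_le.2 hy'.1)
      · exact hint.mono_set (fun y hy => ⟨hy.1.le, hy.2.trans hx₀lt1.le⟩)
      · exact hint.mono_set (fun y hy => ⟨hx₀0.trans hy.1.le, hy.2⟩)
    have hb1 : ∫ y in Set.Ioc (0:ℝ) x₀, h y ≤ K * x₀ := by
      have := MeasureTheory.setIntegral_mono_on
        (f := h) (g := fun _ => K)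
        (hint.mono_set (fun y hy => ⟨hy.1.le, hy.2.trans hx₀lt1.le⟩))
        (MeasureTheory.integrableOn_const (by simp [Real.volume_Ioc]))
        measurableSet_Ioc
        (fun y hy => hhK y hy.1 (hy.2.trans hx₀lt1.le))
      refine this.trans ?_
      rw [MeasureTheory.setIntegral_const, smul_eq_mul, MeasureTheory.measureReal_def, Real.volume_Ioc,
        ENNReal.toReal_ofReal (by linarith)]
      ring_nf
      nlinarith [hx₀0]
    have hb2 : ∫ y in Set.Ioc x₀ 1, h y ≤ h x₀ * (1 - x₀) := by
      have := MeasureTheory.setIntegral_mono_on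
        (f := h) (g := fun _ => h x₀)
        (hint.mono_set (fun y hy => ⟨hx₀0.trans hy.1.le, hy.2⟩))
        (MeasureTheory.integrableOn_const (by simp [Real.volume_Ioc]))
        measurableSet_Ioc
        (fun y hy => hanti hy.1.le)
      refine this.trans ?_
      rw [MeasureTheory.setIntegral_const, smul_eq_mul, MeasureTheory.measureReal_def, Real.volume_Ioc,
        ENNReal.toReal_ofReal (by linarith)]
      ring_nf
      nlinarith [hx₀]
    have hKx₀ : K * x₀ ≤ 1/2 := by
      have := mul_le_mul_of_nonneg_left hx₀le hKpos.le
      rw [show K * (1 / (2 * K)) = 1/2 by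
        rw [mul_one_div]
        rw [div_eq_iff (by linarith : (2:ℝ) * K ≠ 0)]
        ring] at this
      linarith
    have hfin : (1:ℝ) ≤ K * x₀ + h x₀ * (1 - x₀) := by
      calc (1:ℝ) = ∫ y in II, h y := h1eq.symm
        _ = (∫ y in Set.Ioc (0:ℝ) x₀, h y) + ∫ y in Set.Ioc x₀ 1, h y := hsplit
        _ ≤ K * x₀ + h x₀ * (1 - x₀) := add_le_add hb1 hb2
    nlinarith [hfin, hKx₀,
      mul_pos (by linarith : (0:ℝ) < 1/2 - h x₀) (by linarith : (0:ℝ) < 1 - x₀)]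
  -- conclusion
  filter_upwards [hae] with x hx
  by_cases hmem : x ∈ Set.Icc (0:ℝ) (1 / (2 * K))
  · rw [Set.indicator_of_mem hmem, ← hx]
    exact hhalf x hmem
  · rw [Set.indicator_of_notMem hmem, ← hx]
    exact h0 x
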